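/- Let a(x), b(x) ∈ ℂ[x] be nonconstant with a + b + 1 = 0, and write a = ∏_j T_{1j}^{l_{1j}}, b = ∏_j T_{2j}^{l_{2j}} with m_{ij} the number of distinct roots of T_{ij}. Then Σ_j m_{1j}(l_{1j} - 2) + Σ_j m_{2j}(l_{2j} - 2) ≤ -2. -/

import Mathlib

open Polynomial UniqueFactorizationMonoid

/-- Over an alg. closed field, the radical of a nonzero polynomial has natDegree
bounded by the number of distinct roots. -/
lemma radical_natDegree_le_card_roots {x : ℂ[X]} (hx : x ≠ 0) :
    (radical x).natDegree ≤ x.roots.toFinset.card := by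
  have hmem : ∀ p ∈ primeFactors x, p ∈ normalizedFactors x := by
    intro p hp
    exact mem_primeFactors.mp hp
  have hprime : ∀ p ∈ primeFactors x, Prime p := fun p hp =>
    prime_of_normalized_factor p (hmem p hp)
  have hnorm : ∀ p ∈ primeFactors x, normalize p = p := fun p hp =>
    normalize_normalized_factor p (hmem p hp)
  have hdvd : ∀ p ∈ primeFactors x, p ∣ x := fun p hp =>
    dvd_of_mem_normalizedFactors (hmem p hp)
  have hdeg1 : ∀ p ∈ primeFactors x, p.natDegree = 1 := by
    intro p hp
    have := IsAlgClosed.degree_eq_one_of_irreducible ℂ (hprime p hp).irreducible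
    exact natDegree_eq_of_degree_eq_some this
  have hmonic : ∀ p ∈ primeFactors x, p.Monic := by
    intro p hp
    have := hnorm p hp
    have h := Polynomial.monic_normalize (p := p) (hprime p hp).ne_zero
    rwa [this] at h
  have heq : ∀ p ∈ primeFactors x, p = X + C (p.coeff 0) := by
    intro p hp
    have := (hmonic p hp)
    exact Monic.eq_X_add_C this (hdeg1 p hp)
  -- natDegree of radical = card of primeFactors
  have h1 : (radical x).natDegree = (primeFactors x).card := by
    rw [radical, natDegree_prod]
    · rw [Finset.card_eq_sum_ones]
      exact Finset.sum_congr rfl fun p hp => hdeg1 p hp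
    · intro p hp; exact (hprime p hp).ne_zero
  rw [h1]
  apply Finset.card_le_card_of_injOn (fun p => -(p.coeff 0))
  · intro p hp
    simp only [Finset.mem_coe, Multiset.mem_toFinset, mem_roots hx]
    have : p.IsRoot (-(p.coeff 0)) := by
      rw [heq p hp]; simp [IsRoot]
    exact this.dvd (hdvd p hp)
  · intro p hp q hq h
    have hp' := heq p hp
    have hq' := heq q hq
    rw [hp', hq']
    have : p.coeff 0 = q.coeff 0 := by
      have := neg_injective h; exact this
    rw [this]

/-- If `a + b + 1 = 0` with `a, b` nonconstant products `∏ T_{1j}^{l_{1j}}`,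
`∏ T_{2j}^{l_{2j}}` and `m_{ij}` the number of distinct roots of `T_{ij}`, then
`Σ m_{1j}(l_{1j}-2) + Σ m_{2j}(l_{2j}-2) ≤ -2`. -/
theorem type1_abc_inequality (n1 n2 : ℕ)
    (l1 : Fin n1 → ℕ) (l2 : Fin n2 → ℕ)
    (hl1 : ∀ j, 0 < l1 j) (hl2 : ∀ j, 0 < l2 j)
    (T1 : Fin n1 → ℂ[X]) (T2 : Fin n2 → ℂ[X])
    (a b : ℂ[X])
    (ha : a = ∏ j, T1 j ^ l1 j) (hb : b = ∏ j, T2 j ^ l2 j)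
    (hanc : 0 < a.natDegree) (hbnc : 0 < b.natDegree)
    (habc : a + b + 1 = 0) :
    (∑ j, ((T1 j).roots.toFinset.card : ℤ) * ((l1 j : ℤ) - 2))
      + (∑ j, ((T2 j).roots.toFinset.card : ℤ) * ((l2 j : ℤ) - 2)) ≤ -2 := by
  have ha0 : a ≠ 0 := by intro h; rw [h] at hanc; simp at hanc
  have hb0 : b ≠ 0 := by intro h; rw [h] at hbnc; simp at hbnc
  have hT1 : ∀ j, T1 j ≠ 0 := by
    intro j hj
    apply ha0
    rw [ha]
    exact Finset.prod_eq_zero (Finset.mem_univ j) (by rw [hj]; exact zero_pow (hl1 j).ne')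
  have hT2 : ∀ j, T2 j ≠ 0 := by
    intro j hj
    apply hb0
    rw [hb]
    exact Finset.prod_eq_zero (Finset.mem_univ j) (by rw [hj]; exact zero_pow (hl2 j).ne')
  -- coprimality
  have hab : IsCoprime a b := ⟨-1, -1, by linear_combination -habc⟩
  have hbc : IsCoprime b (1 : ℂ[X]) := isCoprime_one_right
  have hca : IsCoprime (1 : ℂ[X]) a := isCoprime_one_left
  -- Mason–Stothers
  rcases Polynomial.abc ha0 hb0 one_ne_zero hab habc with
    ⟨hA, hB, -⟩ | ⟨hda', -, -⟩
  swap
  · exact absurd (natDegree_eq_zero_of_derivative_eq_zero hda') hanc.ne'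
  -- number of distinct roots of a*b*1
  set S1 : ℕ := ∑ j, (T1 j).roots.toFinset.card with hS1
  set S2 : ℕ := ∑ j, (T2 j).roots.toFinset.card with hS2
  have hR : (UniqueFactorizationMonoid.radical (a * b * 1)).natDegree ≤ S1 + S2 := by
    refine (radical_natDegree_le_card_roots (by simp [ha0, hb0] : a * b * 1 ≠ 0)).trans ?_
    have hsub : (a * b * 1).roots.toFinset ⊆
        (Finset.univ.biUnion fun j => (T1 j).roots.toFinset) ∪
        (Finset.univ.biUnion fun j => (T2 j).roots.toFinset) := by
      intro z hz
      rw [Multiset.mem_toFinset, mem_roots (by simp [ha0, hb0])] at hz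
      have hz' : a.eval z * b.eval z = 0 := by
        simpa [IsRoot, eval_mul] using hz
      rcases mul_eq_zero.mp hz' with h | h
      · apply Finset.mem_union_left
        rw [ha, eval_prod] at h
        rcases Finset.prod_eq_zero_iff.mp h with ⟨j, -, hj⟩
        rw [eval_pow, pow_eq_zero_iff (hl1 j).ne'] at hj
        exact Finset.mem_biUnion.mpr ⟨j, Finset.mem_univ j,
          Multiset.mem_toFinset.mpr ((mem_roots (hT1 j)).mpr hj)⟩
      · apply Finset.mem_union_right
        rw [hb, eval_prod] at h
        rcases Finset.prod_eq_zero_iff.mp h with ⟨j, -, hj⟩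
        rw [eval_pow, pow_eq_zero_iff (hl2 j).ne'] at hj
        exact Finset.mem_biUnion.mpr ⟨j, Finset.mem_univ j,
          Multiset.mem_toFinset.mpr ((mem_roots (hT2 j)).mpr hj)⟩
    refine (Finset.card_le_card hsub).trans ?_
    refine (Finset.card_union_le _ _).trans ?_
    exact Nat.add_le_add (Finset.card_biUnion_le) (Finset.card_biUnion_le)
  -- degree computations
  have hda : a.natDegree = ∑ j, l1 j * (T1 j).natDegree := by
    rw [ha, natDegree_prod _ _ (fun j _ => pow_ne_zero _ (hT1 j))]
    exact Finset.sum_congr rfl fun j _ => natDegree_pow _ _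
  have hdb : b.natDegree = ∑ j, l2 j * (T2 j).natDegree := by
    rw [hb, natDegree_prod _ _ (fun j _ => pow_ne_zero _ (hT2 j))]
    exact Finset.sum_congr rfl fun j _ => natDegree_pow _ _
  have f1 : ∑ j, (T1 j).roots.toFinset.card * l1 j ≤ a.natDegree := by
    rw [hda]
    refine Finset.sum_le_sum fun j _ => ?_
    rw [mul_comm (l1 j)]
    exact Nat.mul_le_mul_right _ ((Multiset.toFinset_card_le _).trans (card_roots' _))
  have f2 : ∑ j, (T2 j).roots.toFinset.card * l2 j ≤ b.natDegree := by
    rw [hdb]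
    refine Finset.sum_le_sum fun j _ => ?_
    rw [mul_comm (l2 j)]
    exact Nat.mul_le_mul_right _ ((Multiset.toFinset_card_le _).trans (card_roots' _))
  -- rearrange and conclude
  have e1 : ∑ j, ((T1 j).roots.toFinset.card : ℤ) * ((l1 j : ℤ) - 2)
      = ((∑ j, (T1 j).roots.toFinset.card * l1 j : ℕ) : ℤ) - 2 * (S1 : ℤ) := by
    rw [hS1]; push_cast
    rw [Finset.mul_sum, ← Finset.sum_sub_distrib]
    exact Finset.sum_congr rfl fun j _ => by ring
  have e2 : ∑ j, ((T2 j).roots.toFinset.card : ℤ) * ((l2 j : ℤ) - 2)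
      = ((∑ j, (T2 j).roots.toFinset.card * l2 j : ℕ) : ℤ) - 2 * (S2 : ℤ) := by
    rw [hS2]; push_cast
    rw [Finset.mul_sum, ← Finset.sum_sub_distrib]
    exact Finset.sum_congr rfl fun j _ => by ring
  rw [e1, e2]
  have g1' : ((∑ j, (T1 j).roots.toFinset.card * l1 j : ℕ) : ℤ) + 1 ≤ (S1 : ℤ) + (S2 : ℤ) := by
    exact_mod_cast Nat.succ_le_of_lt (f1.trans_lt ((Nat.lt_of_succ_le hA).trans_le hR))
  have g2' : ((∑ j, (T2 j).roots.toFinset.card * l2 j : ℕ) : ℤ) + 1 ≤ (S1 : ℤ) + (S2 : ℤ) := by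
    exact_mod_cast Nat.succ_le_of_lt (f2.trans_lt ((Nat.lt_of_succ_le hB).trans_le hR))
  linarith
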